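/- There is a constant C' such that the following holds. Let (W,B) be a (δ,t)-bipartite pair of Ψ-circles with #W = m ≥ 2 and #B = n ≥ 2, and let μ₀ ≥ 1. Then W can be written as a disjoint union W = W_g ⊔ W_b such that: (i) there is no (δ,t)-rectangle of type (≳μ₀,≳1) relative to (W_g, B); and (ii) W_b is a union of at most C' (m/μ₀)(log m)(log n) clusters. -/

import Mathlib

/-! STATEMENT 12 -/

open MeasureTheory Metric Set
open scoped ENNReal

noncomputable section

abbrev E2 := EuclideanSpace ℝ (Fin 2)

/-- Evaluation of a polynomial `Ψ : ℝ²×ℝ² → ℝ` (encoded as a polynomial in 4 variables). -/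
noncomputable def pev (Ψ : MvPolynomial (Fin 4) ℝ) (x y : E2) : ℝ :=
  MvPolynomial.eval ![x 0, x 1, y 0, y 1] Ψ

/-- The gradient of `Ψ` in the second (the `y`) variable. -/
noncomputable def gradY (Ψ : MvPolynomial (Fin 4) ℝ) (x y : E2) : E2 :=
  gradient (fun y' => pev Ψ x y') y

/-- The unit vector in the direction of `∇_y Ψ`. -/
noncomputable def unitGradY (Ψ : MvPolynomial (Fin 4) ℝ) (x y : E2) : E2 :=
  ‖gradY Ψ x y‖⁻¹ • gradY Ψ x y

/-- First row of the cinematic curvature matrix: `∇_x [e · ∇_y Ψ(x,y)]` at `(a,b)`. -/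
noncomputable def cinRow1 (Ψ : MvPolynomial (Fin 4) ℝ) (e a b : E2) : E2 :=
  gradient (fun x => (inner ℝ e (gradY Ψ x b) : ℝ)) a

/-- Second row of the cinematic curvature matrix:
`∇_x [e · ∇_y (e · ∇_y Ψ(x,y) / |∇_y Ψ(x,y)|)]` at `(a,b)`. -/
noncomputable def cinRow2 (Ψ : MvPolynomial (Fin 4) ℝ) (e a b : E2) : E2 :=
  gradient (fun x =>
    (inner ℝ e (gradient (fun y => (inner ℝ e (unitGradY Ψ x y) : ℝ)) b) : ℝ)) a

/-- Sogge's cinematic curvature conditions at the point `(a,b)`. -/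
def CinematicAt (Ψ : MvPolynomial (Fin 4) ℝ) (a b : E2) : Prop :=
  gradY Ψ a b ≠ 0 ∧
  ∀ e : E2, ‖e‖ = 1 → (inner ℝ e (gradY Ψ a b) : ℝ) = 0 →
    Matrix.det !![cinRow1 Ψ e a b 0, cinRow1 Ψ e a b 1;
                  cinRow2 Ψ e a b 0, cinRow2 Ψ e a b 1] ≠ 0

/-- A `Ψ`-circle: a pair `(x₀, r₀)` with `x₀ ∈ B(0,α)` and `r₀ ∈ (1-τ,1)`. -/
structure PsiCircle (Ψ : MvPolynomial (Fin 4) ℝ) (α τ : ℝ) where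
  x₀ : E2
  r₀ : ℝ
  hx : x₀ ∈ ball (0:E2) α
  hr : r₀ ∈ Ioo (1 - τ) 1

/-- The point set `Γ(x₀,r₀) = {y ∈ B(0,α) : Ψ(x₀,y) = r₀}` of a `Ψ`-circle. -/
def circleSet {Ψ : MvPolynomial (Fin 4) ℝ} {α τ : ℝ} (Γ : PsiCircle Ψ α τ) : Set E2 :=
  {y ∈ ball (0:E2) α | pev Ψ Γ.x₀ y = Γ.r₀}

/-- The distance `d(Γ,Γ') = |x₀ - x̃₀| + |r₀ - r̃₀|` between two `Ψ`-circles. -/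
noncomputable def dd {Ψ : MvPolynomial (Fin 4) ℝ} {α τ : ℝ} (Γ Γ' : PsiCircle Ψ α τ) : ℝ :=
  dist Γ.x₀ Γ'.x₀ + |Γ.r₀ - Γ'.r₀|

/-- The "tangency distance" `Δ(Γ,Γ')` between two `Ψ`-circles. -/
noncomputable def DeltaDist {Ψ : MvPolynomial (Fin 4) ℝ} {α τ : ℝ}
    (Γ Γ' : PsiCircle Ψ α τ) : ℝ :=
  sInf {v : ℝ | ∃ y ∈ ball (0:E2) α, ∃ y' ∈ ball (0:E2) α,
    pev Ψ Γ.x₀ y = Γ.r₀ ∧ pev Ψ Γ'.x₀ y' = Γ'.r₀ ∧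
    v = ‖y - y'‖ + ‖unitGradY Ψ Γ.x₀ y - unitGradY Ψ Γ'.x₀ y'‖}

/-- `(W,B)` is a `(δ,t)`-bipartite pair of `Ψ`-circles. -/
def Bipartite {Ψ : MvPolynomial (Fin 4) ℝ} {α τ : ℝ} (δ t : ℝ)
    (W B : Finset (PsiCircle Ψ α τ)) : Prop :=
  (∀ Γ, (Γ ∈ W ∨ Γ ∈ B) → ∀ Γ', (Γ' ∈ W ∨ Γ' ∈ B) → Γ ≠ Γ' → δ ≤ |Γ.r₀ - Γ'.r₀|) ∧
  (∀ Γ ∈ W, ∀ Γ' ∈ B, dd Γ Γ' ∈ Ioo t (2*t)) ∧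
  (∀ Γ ∈ W, ∀ Γ' ∈ W, Γ ≠ Γ' → dd Γ Γ' ∈ Ioo 0 t) ∧
  (∀ Γ ∈ B, ∀ Γ' ∈ B, Γ ≠ Γ' → dd Γ Γ' ∈ Ioo 0 t)

/-- A `(δ,t)`-rectangle: the `δ`-neighborhood of a (connected) arc of arclength
`√(δ/t)` of a `Ψ`-circle. -/
def IsRect (Ψ : MvPolynomial (Fin 4) ℝ) (α τ δ t : ℝ) (R : Set E2) : Prop :=
  ∃ (Γ : PsiCircle Ψ α τ) (A : Set E2), A ⊆ circleSet Γ ∧ IsConnected A ∧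
    μH[1] A = ENNReal.ofReal (Real.sqrt (δ / t)) ∧ R = cthickening δ A

/-- A `Ψ`-circle `Γ` is incident to `R` if `R` is contained in the `C₁δ`-neighborhood of
`Γ`. -/
def Incident (C₁ δ : ℝ) {Ψ : MvPolynomial (Fin 4) ℝ} {α τ : ℝ}
    (R : Set E2) (Γ : PsiCircle Ψ α τ) : Prop :=
  R ⊆ cthickening (C₁ * δ) (circleSet Γ)

/-- `R` is of type `(≳μ,≳ν)` relative to `(W,B)`: it is incident to at least `Cc·μ`
circles of `W` and at least `Cc·ν` circles of `B`. -/
def RectType (Cc C₁ δ : ℝ) {Ψ : MvPolynomial (Fin 4) ℝ} {α τ : ℝ}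
    (W B : Finset (PsiCircle Ψ α τ)) (μ ν : ℝ) (R : Set E2) : Prop :=
  Cc * μ ≤ ({Γ ∈ (W : Set (PsiCircle Ψ α τ)) | Incident C₁ δ R Γ}).ncard ∧
  Cc * ν ≤ ({Γ ∈ (B : Set (PsiCircle Ψ α τ)) | Incident C₁ δ R Γ}).ncard

/-- Two `(δ,t)`-rectangles are comparable if each is contained in the
`A₀δ`-neighborhood of the other. -/
def Comparable (A₀ δ : ℝ) (R₁ R₂ : Set E2) : Prop :=
  R₁ ⊆ cthickening (A₀ * δ) R₂ ∧ R₂ ⊆ cthickening (A₀ * δ) R₁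

/-- A cluster: a collection of `Ψ`-circles each of which is incident to some
`(δ,t)`-rectangle comparable to a fixed `(δ,t)`-rectangle `R₀`. -/
def IsCluster (Ψ : MvPolynomial (Fin 4) ℝ) (α τ C₁ A₀ δ t : ℝ)
    (C : Finset (PsiCircle Ψ α τ)) : Prop :=
  ∃ R₀ : Set E2, IsRect Ψ α τ δ t R₀ ∧
    ∀ Γ ∈ C, ∃ R : Set E2, IsRect Ψ α τ δ t R ∧ Comparable A₀ δ R R₀ ∧ Incident C₁ δ R Γ

section Aux

variable {Ψ : MvPolynomial (Fin 4) ℝ} {α τ : ℝ}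

/-- There is a rectangle of type `(≳μ₀,≳1)` relative to `(V,B)`. -/
def PBad (Cc C₁ δ t μ₀ : ℝ) (B V : Finset (PsiCircle Ψ α τ)) : Prop :=
  ∃ R : Set E2, IsRect Ψ α τ δ t R ∧ RectType Cc C₁ δ V B μ₀ 1 R

open Classical in
/-- A choice of such a rectangle. -/
noncomputable def RBad (Cc C₁ δ t μ₀ : ℝ) (B V : Finset (PsiCircle Ψ α τ)) : Set E2 :=
  if h : PBad Cc C₁ δ t μ₀ B V then h.choose else ∅

open Classical in
/-- The circles of `V` incident to the chosen rectangle. -/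
noncomputable def clBad (Cc C₁ δ t μ₀ : ℝ) (B V : Finset (PsiCircle Ψ α τ)) :
    Finset (PsiCircle Ψ α τ) :=
  V.filter (fun Γ => Incident C₁ δ (RBad Cc C₁ δ t μ₀ B V) Γ)

open Classical in
/-- One step of the pruning process: remove the circles incident to the chosen rectangle. -/
noncomputable def stepBad (Cc C₁ δ t μ₀ : ℝ) (B V : Finset (PsiCircle Ψ α τ)) :
    Finset (PsiCircle Ψ α τ) :=
  if PBad Cc C₁ δ t μ₀ B V then
    V.filter (fun Γ => ¬ Incident C₁ δ (RBad Cc C₁ δ t μ₀ B V) Γ)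
  else V

/-- Iterating the pruning process. -/
noncomputable def fBad (Cc C₁ δ t μ₀ : ℝ) (B W : Finset (PsiCircle Ψ α τ)) :
    ℕ → Finset (PsiCircle Ψ α τ)
  | 0 => W
  | k + 1 => stepBad Cc C₁ δ t μ₀ B (fBad Cc C₁ δ t μ₀ B W k)

lemma RBad_spec {Cc C₁ δ t μ₀ : ℝ} {B V : Finset (PsiCircle Ψ α τ)}
    (h : PBad Cc C₁ δ t μ₀ B V) :
    IsRect Ψ α τ δ t (RBad Cc C₁ δ t μ₀ B V) ∧
      RectType Cc C₁ δ V B μ₀ 1 (RBad Cc C₁ δ t μ₀ B V) := by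
  unfold RBad
  rw [dif_pos h]
  exact h.choose_spec

open Classical in
lemma stepBad_subset (Cc C₁ δ t μ₀ : ℝ) (B V : Finset (PsiCircle Ψ α τ)) :
    stepBad Cc C₁ δ t μ₀ B V ⊆ V := by
  unfold stepBad
  split
  · exact Finset.filter_subset _ _
  · exact Finset.Subset.refl _

open Classical in
lemma clBad_card {Cc C₁ δ t μ₀ : ℝ} {B V : Finset (PsiCircle Ψ α τ)}
    (h : PBad Cc C₁ δ t μ₀ B V) :
    Cc * μ₀ ≤ ((clBad Cc C₁ δ t μ₀ B V).card : ℝ) := by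
  have h1 := (RBad_spec h).2.1
  have h2 : {Γ ∈ (V : Set (PsiCircle Ψ α τ)) | Incident C₁ δ (RBad Cc C₁ δ t μ₀ B V) Γ}
      = ↑(clBad Cc C₁ δ t μ₀ B V) := by
    unfold clBad
    rw [Finset.coe_filter]
    rfl
  rwa [h2, Set.ncard_coe_finset] at h1

open Classical in
lemma stepBad_card {Cc C₁ δ t μ₀ : ℝ} {B V : Finset (PsiCircle Ψ α τ)}
    (h : PBad Cc C₁ δ t μ₀ B V) :
    ((stepBad Cc C₁ δ t μ₀ B V).card : ℝ) + Cc * μ₀ ≤ (V.card : ℝ) := by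
  have h3 : (clBad Cc C₁ δ t μ₀ B V).card + (stepBad Cc C₁ δ t μ₀ B V).card = V.card := by
    unfold stepBad clBad
    rw [if_pos h]
    exact Finset.card_filter_add_card_filter_not _
  have h4 := clBad_card h
  have h5 : ((clBad Cc C₁ δ t μ₀ B V).card : ℝ) + ((stepBad Cc C₁ δ t μ₀ B V).card : ℝ)
      = (V.card : ℝ) := by exact_mod_cast congrArg (Nat.cast : ℕ → ℝ) h3
  linarith

open Classical in
lemma mem_clBad_of {Cc C₁ δ t μ₀ : ℝ} {B V : Finset (PsiCircle Ψ α τ)}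
    (h : PBad Cc C₁ δ t μ₀ B V) {Γ : PsiCircle Ψ α τ}
    (hΓ : Γ ∈ V) (hΓ' : Γ ∉ stepBad Cc C₁ δ t μ₀ B V) :
    Γ ∈ clBad Cc C₁ δ t μ₀ B V := by
  unfold stepBad at hΓ'
  rw [if_pos h] at hΓ'
  unfold clBad
  rw [Finset.mem_filter]
  refine ⟨hΓ, ?_⟩
  by_contra hc
  exact hΓ' (Finset.mem_filter.mpr ⟨hΓ, hc⟩)

open Classical in
lemma clBad_isCluster {Cc C₁ δ t μ₀ : ℝ} (A₀ : ℝ) {B V : Finset (PsiCircle Ψ α τ)}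
    (h : PBad Cc C₁ δ t μ₀ B V) :
    IsCluster Ψ α τ C₁ A₀ δ t (clBad Cc C₁ δ t μ₀ B V) := by
  obtain ⟨hrect, -⟩ := RBad_spec h
  refine ⟨RBad Cc C₁ δ t μ₀ B V, hrect, fun Γ hΓ => ?_⟩
  refine ⟨RBad Cc C₁ δ t μ₀ B V, hrect,
    ⟨self_subset_cthickening _, self_subset_cthickening _⟩, ?_⟩
  unfold clBad at hΓ
  rw [Finset.mem_filter] at hΓ
  exact hΓ.2

end Aux

/-- decomposition into a good part and a bounded union of clusters. -/
theorem good_bad_decomposition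
    (C₁ Cc A₀ : ℝ) (hC₁ : 0 < C₁) (hCc : 0 < Cc) (hA₀ : 0 < A₀)
    (Ψ : MvPolynomial (Fin 4) ℝ) (hcin : CinematicAt Ψ 0 0) :
    ∃ α > (0:ℝ), ∃ τ > (0:ℝ), ∃ C' > (0:ℝ),
      ∀ δ t : ℝ, 0 < δ → δ < t →
        ∀ W B : Finset (PsiCircle Ψ α τ), Bipartite δ t W B →
          2 ≤ W.card → 2 ≤ B.card →
          ∀ μ₀ : ℝ, 1 ≤ μ₀ →
            ∃ Wg Wb : Finset (PsiCircle Ψ α τ),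
              Wg ⊆ W ∧ Wb ⊆ W ∧ Disjoint Wg Wb ∧ (∀ Γ ∈ W, Γ ∈ Wg ∨ Γ ∈ Wb) ∧
              -- (i) no (δ,t)-rectangle of type (≳μ₀,≳1) relative to (Wg, B)
              (¬ ∃ R : Set E2, IsRect Ψ α τ δ t R ∧ RectType Cc C₁ δ Wg B μ₀ 1 R) ∧
              -- (ii) Wb is a union of at most C'(m/μ₀)(log m)(log n) clusters
              ∃ (N : ℕ) (Cl : Fin N → Finset (PsiCircle Ψ α τ)),
                (N : ℝ) ≤ C' * ((W.card : ℝ) / μ₀) * Real.log W.card * Real.log B.card ∧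
                (∀ i, IsCluster Ψ α τ C₁ A₀ δ t (Cl i)) ∧
                (∀ Γ ∈ Wb, ∃ i, Γ ∈ Cl i) := by
  classical
  have hl2 : (0:ℝ) < Real.log 2 := Real.log_pos (by norm_num)
  have hC' : (0:ℝ) < (Cc * (Real.log 2)^2)⁻¹ :=
    inv_pos.mpr (mul_pos hCc (pow_pos hl2 2))
  refine ⟨1, one_pos, 1/2, by norm_num, (Cc * (Real.log 2)^2)⁻¹, hC', ?_⟩
  intro δ t hδ hδt W B hbi hm hn μ₀ hμ₀
  have hμpos : (0:ℝ) < μ₀ := lt_of_lt_of_le one_pos hμ₀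
  have hCμ : 0 < Cc * μ₀ := mul_pos hCc hμpos
  set f : ℕ → Finset (PsiCircle Ψ 1 (1/2)) := fBad Cc C₁ δ t μ₀ B W with hf
  have hf0 : f 0 = W := rfl
  have hfs : ∀ k, f (k+1) = stepBad Cc C₁ δ t μ₀ B (f k) := fun k => rfl
  have hsub : ∀ k, f k ⊆ W := by
    intro k
    induction k with
    | zero => exact hf0 ▸ Finset.Subset.refl W
    | succ k ih =>
      rw [hfs k]
      exact (stepBad_subset Cc C₁ δ t μ₀ B (f k)).trans ih
  have key : ∀ k, (∀ j, j < k → PBad Cc C₁ δ t μ₀ B (f j)) →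
      (k:ℝ) * (Cc*μ₀) + ((f k).card : ℝ) ≤ (W.card : ℝ) := by
    intro k
    induction k with
    | zero => intro _; simp [hf0]
    | succ k ih =>
      intro h
      have h1 := ih (fun j hj => h j (hj.trans (Nat.lt_succ_self k)))
      have h2 := stepBad_card (h k (Nat.lt_succ_self k))
      rw [← hfs k] at h2
      push_cast
      linarith
  have hex : ∃ k, ¬ PBad Cc C₁ δ t μ₀ B (f k) := by
    by_contra hcon
    push_neg at hcon
    obtain ⟨k, hk⟩ := exists_nat_gt ((W.card : ℝ) / (Cc*μ₀))
    have h1 := key k (fun j _ => hcon j)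
    have h2 : (W.card:ℝ) < (k:ℝ) * (Cc*μ₀) := (div_lt_iff₀ hCμ).mp hk
    have h3 : (0:ℝ) ≤ ((f k).card : ℝ) := Nat.cast_nonneg _
    linarith
  set K := Nat.find hex with hKdef
  have hKspec : ¬ PBad Cc C₁ δ t μ₀ B (f K) := Nat.find_spec hex
  have hKmin : ∀ j, j < K → PBad Cc C₁ δ t μ₀ B (f j) :=
    fun j hj => not_not.mp (Nat.find_min hex hj)
  refine ⟨f K, W \ f K, hsub K, Finset.sdiff_subset, Finset.disjoint_sdiff, ?_, hKspec,
    K, fun i => clBad Cc C₁ δ t μ₀ B (f i), ?_, ?_, ?_⟩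
  · intro Γ hΓ
    by_cases h : Γ ∈ f K
    · exact Or.inl h
    · exact Or.inr (Finset.mem_sdiff.mpr ⟨hΓ, h⟩)
  · -- the bound on the number of clusters
    have h1 := key K hKmin
    have h3 : (0:ℝ) ≤ ((f K).card : ℝ) := Nat.cast_nonneg _
    have h2 : (K:ℝ) ≤ (W.card:ℝ) / (Cc*μ₀) := by
      rw [le_div_iff₀ hCμ]; linarith
    have hm' : (2:ℝ) ≤ (W.card : ℝ) := by exact_mod_cast hm
    have hn' : (2:ℝ) ≤ (B.card : ℝ) := by exact_mod_cast hn
    have hlm : Real.log 2 ≤ Real.log (W.card : ℝ) :=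
      Real.log_le_log (by norm_num) hm'
    have hln : Real.log 2 ≤ Real.log (B.card : ℝ) :=
      Real.log_le_log (by norm_num) hn'
    have ha : (0:ℝ) ≤ (Cc * (Real.log 2)^2)⁻¹ * ((W.card:ℝ)/μ₀) :=
      mul_nonneg hC'.le (div_nonneg (Nat.cast_nonneg _) hμpos.le)
    have heq : (Cc * (Real.log 2)^2)⁻¹ * ((W.card:ℝ)/μ₀) * Real.log 2 * Real.log 2
        = (W.card:ℝ) / (Cc*μ₀) := by
      field_simp
    have hstep : (Cc * (Real.log 2)^2)⁻¹ * ((W.card:ℝ)/μ₀) * Real.log 2 * Real.log 2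
        ≤ (Cc * (Real.log 2)^2)⁻¹ * ((W.card:ℝ)/μ₀)
          * Real.log (W.card:ℝ) * Real.log (B.card:ℝ) := by
      have hb : (0:ℝ) ≤ (Cc * (Real.log 2)^2)⁻¹ * ((W.card:ℝ)/μ₀) * Real.log (W.card:ℝ) :=
        mul_nonneg ha (hl2.trans_le hlm).le
      calc (Cc * (Real.log 2)^2)⁻¹ * ((W.card:ℝ)/μ₀) * Real.log 2 * Real.log 2
          ≤ (Cc * (Real.log 2)^2)⁻¹ * ((W.card:ℝ)/μ₀) * Real.log (W.card:ℝ) * Real.log 2 := by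
            exact mul_le_mul_of_nonneg_right (mul_le_mul_of_nonneg_left hlm ha) hl2.le
        _ ≤ _ := mul_le_mul_of_nonneg_left hln hb
    linarith
  · intro i
    exact clBad_isCluster A₀ (hKmin i i.isLt)
  · intro Γ hΓ
    rw [Finset.mem_sdiff] at hΓ
    have main : ∀ k, k ≤ K → Γ ∉ f k →
        ∃ j : ℕ, ∃ hj : j < K, Γ ∈ clBad Cc C₁ δ t μ₀ B (f j) := by
      intro k
      induction k with
      | zero => intro _ hc; exact absurd hΓ.1 (hf0 ▸ hc)
      | succ k ih =>
        intro hk hnk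
        by_cases hmem : Γ ∈ f k
        · have hPk := hKmin k (lt_of_lt_of_le (Nat.lt_succ_self k) hk)
          exact ⟨k, lt_of_lt_of_le (Nat.lt_succ_self k) hk,
            mem_clBad_of hPk hmem (hfs k ▸ hnk)⟩
        · exact ih (le_trans (Nat.le_succ k) hk) hmem
    obtain ⟨j, hj, hmem⟩ := main K le_rfl hΓ.2
    exact ⟨⟨j, hj⟩, hmem⟩
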